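/- For orthonormal z ∈ Z and e ∈ E, the sectional curvature is K(z,e) = ¼ ε_z ε̄_e ⟨j(ιz)e, j(ιz)e⟩, where ε_z = ⟨z,z⟩ and ε̄_e = ⟨e,e⟩. -/

import Mathlib

/-- For orthonormal `z ∈ Z` and `e ∈ E`, the sectional curvature is
`K(z,e) = ¼ ε_z ε̄_e ⟨j(ιz)e, j(ιz)e⟩`, where `ε_z = ⟨z,z⟩` and `ε̄_e = ⟨e,e⟩`.
Here `n = U ⊕ Z ⊕ V ⊕ E` is a 2-step nilpotent metric Lie algebra, the Levi-Civita
connection is `∇_x y = ½([x,y] - ad⁺_x y - ad⁺_y x)`, `j(a)x = ι ad⁺_x (ι a)`, and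
`K(x,y) = ⟨R(x,y)y, x⟩ / (⟨x,x⟩⟨y,y⟩ - ⟨x,y⟩²)`. -/
theorem sectional_curvature_Z_E
    {n : Type*} [LieRing n] [LieAlgebra ℝ n]
    (B : LinearMap.BilinForm ℝ n) (hBsymm : ∀ x y : n, B x y = B y x)
    (hBnd : B.Nondegenerate)
    (U Z V E : Submodule ℝ n)
    (hcent : ∀ c ∈ U ⊔ Z, ∀ x : n, ⁅c, x⁆ = 0)
    (h2step : ∀ x y : n, ⁅x, y⁆ ∈ U ⊔ Z)
    (hdecomp : U ⊔ Z ⊔ V ⊔ E = ⊤)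
    (hUU : ∀ u ∈ U, ∀ u' ∈ U, B u u' = 0)
    (hVV : ∀ v ∈ V, ∀ v' ∈ V, B v v' = 0)
    (hUZ : ∀ u ∈ U, ∀ z ∈ Z, B u z = 0)
    (hUE : ∀ u ∈ U, ∀ e ∈ E, B u e = 0)
    (hVZ : ∀ v ∈ V, ∀ z ∈ Z, B v z = 0)
    (hVE : ∀ v ∈ V, ∀ e ∈ E, B v e = 0)
    (hZE : ∀ z ∈ Z, ∀ e ∈ E, B z e = 0)
    (ι : n →ₗ[ℝ] n) (hι2 : ∀ x, ι (ι x) = x) (hιsa : ∀ x y : n, B (ι x) y = B x (ι y))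
    (hιU : ∀ x ∈ U, ι x ∈ V) (hιV : ∀ x ∈ V, ι x ∈ U)
    (hιZ : ∀ x ∈ Z, ι x ∈ Z) (hιE : ∀ x ∈ E, ι x ∈ E)
    (adP : n →ₗ[ℝ] n →ₗ[ℝ] n)
    (hadP : ∀ x y w : n, B (adP x y) w = B y ⁅x, w⁆)
    (j : n →ₗ[ℝ] n →ₗ[ℝ] n)
    (hj : ∀ a x : n, j a x = ι (adP x (ι a)))
    (nabla : n → n → n)
    (hnabla : ∀ x y : n, nabla x y = (2:ℝ)⁻¹ • (⁅x, y⁆ - adP x y - adP y x))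
    (R : n → n → n → n)
    (hR : ∀ x y w : n,
      R x y w = nabla x (nabla y w) - nabla y (nabla x w) - nabla ⁅x, y⁆ w)
    (z e : n) (hz : z ∈ Z) (he : e ∈ E)
    (hz1 : B z z = 1 ∨ B z z = -1) (he1 : B e e = 1 ∨ B e e = -1)
    (hze : B z e = 0) :
    B (R z e e) z / (B z z * B e e - B z e ^ 2)
      = (4:ℝ)⁻¹ * B z z * B e e * B (j (ι z) e) (j (ι z) e) := by
  set a := adP e z with ha
  have hzc : ∀ x : n, ⁅z, x⁆ = 0 := hcent z (Submodule.mem_sup_right hz)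
  have hze0 : ⁅z, e⁆ = 0 := hzc e
  have hez0 : ⁅e, z⁆ = 0 := by rw [← lie_skew, hze0, neg_zero]
  have hEorth : ∀ c ∈ U ⊔ Z, B e c = 0 := by
    intro c hc
    rcases Submodule.mem_sup.mp hc with ⟨u, hu, w, hw, rfl⟩
    rw [map_add, hBsymm e u, hBsymm e w, hUE u hu e he, hZE w hw e he, add_zero]
  have h1 : adP z e = 0 := hBnd.1 _ (fun w => by rw [hadP, hzc w, map_zero])
  have h2 : adP e e = 0 := hBnd.1 _ (fun w => by rw [hadP]; exact hEorth _ (h2step e w))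
  have hnee : nabla e e = 0 := by rw [hnabla, h2, lie_self]; simp
  have hnze : nabla z e = -((2:ℝ)⁻¹ • a) := by
    rw [hnabla, hze0, h1, ← ha]; simp
  have n1 : nabla z 0 = 0 := by rw [hnabla]; simp
  have n2 : nabla 0 e = 0 := by rw [hnabla]; simp
  have hba : B ⁅e, a⁆ z = B a a := by rw [hBsymm, ← hadP, ← ha]
  have hb1 : B (adP e a) z = 0 := by rw [hadP, hez0, map_zero]
  have hb2 : B (adP a e) z = 0 := by
    rw [hadP]
    have : ⁅a, z⁆ = 0 := by rw [← lie_skew, hzc, neg_zero]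
    rw [this, map_zero]
  have key : B (R z e e) z = (4:ℝ)⁻¹ * B a a := by
    rw [hR, hnee, hze0, n1, n2, hnze, hnabla]
    simp only [lie_neg, lie_smul, map_neg, map_smul, LinearMap.neg_apply,
      LinearMap.smul_apply, smul_neg, neg_neg, zero_sub, sub_zero, neg_sub,
      smul_sub, smul_smul, map_sub, smul_eq_mul]
    simp only [LinearMap.sub_apply, LinearMap.neg_apply, LinearMap.smul_apply, smul_eq_mul]
    rw [hba, hb1, hb2]
    ring
  have hja : j (ι z) e = ι a := by rw [hj, hι2, ha]
  have hjB : B (j (ι z) e) (j (ι z) e) = B a a := by rw [hja, hιsa, hι2]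
  rw [key, hjB, hze]
  rcases hz1 with h | h <;> rcases he1 with h' | h' <;> rw [h, h'] <;> ring
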